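/- arXiv:0810.4357 — 5 statements merged into one kernel-verified Lean document; each statement's English description precedes it below -/
import Mathlib

section
/- Let u(s) = (s²-1)² + (s-1)² and for μ > 0 define f(μ) = (∫_1^R √(μ+u(s))/s ds) · (∫_1^R 1/(s√(μ+u(s))) ds), where R > 1. Then f is strictly decreasing on (0,∞). -/
open MeasureTheory Real


noncomputable def st3u (s : ℝ) : ℝ := (s ^ 2 - 1) ^ 2 + (s - 1) ^ 2
noncomputable def st3F (κ s : ℝ) : ℝ := Real.sqrt (κ + st3u s) / s
noncomputable def st3G (κ s : ℝ) : ℝ := 1 / (s * Real.sqrt (κ + st3u s))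

lemma st3u_nonneg (s : ℝ) : 0 ≤ st3u s := by unfold st3u; positivity

lemma st3u_mono {s t : ℝ} (hs : 1 ≤ s) (hst : s < t) : st3u s < st3u t := by
  unfold st3u
  have h1 : (s-1)^2 < (t-1)^2 := by nlinarith
  have h2 : (s^2-1)^2 ≤ (t^2-1)^2 := by nlinarith
  linarith

lemma st3_key {μ ν a b : ℝ} (hμ : 0 < μ) (hμν : μ < ν) (ha : 0 ≤ a) (hb : 0 ≤ b) :
    (ν+a+(ν+b)) * (Real.sqrt (μ+a) * Real.sqrt (μ+b)) ≤
    (μ+a+(μ+b)) * (Real.sqrt (ν+a) * Real.sqrt (ν+b)) := by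
  have e1 : (ν+a+(ν+b)) * (Real.sqrt (μ+a) * Real.sqrt (μ+b))
      = Real.sqrt ((ν+a+(ν+b))^2 * ((μ+a)*(μ+b))) := by
    rw [Real.sqrt_mul (sq_nonneg _), Real.sqrt_sq (by nlinarith),
      Real.sqrt_mul (by nlinarith)]
  have e2 : (μ+a+(μ+b)) * (Real.sqrt (ν+a) * Real.sqrt (ν+b))
      = Real.sqrt ((μ+a+(μ+b))^2 * ((ν+a)*(ν+b))) := by
    rw [Real.sqrt_mul (sq_nonneg _), Real.sqrt_sq (by nlinarith),
      Real.sqrt_mul (by nlinarith)]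
  rw [e1, e2]
  apply Real.sqrt_le_sqrt
  have hid : (μ+a+(μ+b))^2*((ν+a)*(ν+b)) - (ν+a+(ν+b))^2*((μ+a)*(μ+b))
      = (ν-μ)*(a-b)^2*(μ+ν+a+b) := by ring
  nlinarith [sq_nonneg (a-b), mul_nonneg (mul_nonneg (by linarith : (0:ℝ) ≤ ν-μ)
    (sq_nonneg (a-b))) (by nlinarith : (0:ℝ) ≤ μ+ν+a+b)]

lemma st3_key_lt {μ ν a b : ℝ} (hμ : 0 < μ) (hμν : μ < ν) (ha : 0 ≤ a) (hb : 0 ≤ b)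
    (hab : a ≠ b) :
    (ν+a+(ν+b)) * (Real.sqrt (μ+a) * Real.sqrt (μ+b)) <
    (μ+a+(μ+b)) * (Real.sqrt (ν+a) * Real.sqrt (ν+b)) := by
  have e1 : (ν+a+(ν+b)) * (Real.sqrt (μ+a) * Real.sqrt (μ+b))
      = Real.sqrt ((ν+a+(ν+b))^2 * ((μ+a)*(μ+b))) := by
    rw [Real.sqrt_mul (sq_nonneg _), Real.sqrt_sq (by nlinarith),
      Real.sqrt_mul (by nlinarith)]
  have e2 : (μ+a+(μ+b)) * (Real.sqrt (ν+a) * Real.sqrt (ν+b))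
      = Real.sqrt ((μ+a+(μ+b))^2 * ((ν+a)*(ν+b))) := by
    rw [Real.sqrt_mul (sq_nonneg _), Real.sqrt_sq (by nlinarith),
      Real.sqrt_mul (by nlinarith)]
  rw [e1, e2]
  apply Real.sqrt_lt_sqrt (le_of_lt (mul_pos (pow_pos (by linarith) 2)
    (mul_pos (by linarith) (by linarith))))
  have hid : (μ+a+(μ+b))^2*((ν+a)*(ν+b)) - (ν+a+(ν+b))^2*((μ+a)*(μ+b))
      = (ν-μ)*(a-b)^2*(μ+ν+a+b) := by ring
  have hab2 : 0 < (a-b)^2 := pow_two_pos_of_ne_zero (sub_ne_zero.mpr hab)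
  nlinarith [mul_pos (mul_pos (by linarith : (0:ℝ) < ν-μ) hab2)
    (by nlinarith : (0:ℝ) < μ+ν+a+b)]

lemma st3_sum_eq {κ s t : ℝ} (hκ : 0 < κ) (hs : 0 < s) (ht : 0 < t) :
    st3F κ s * st3G κ t + st3F κ t * st3G κ s
      = ((κ + st3u s) + (κ + st3u t)) /
        ((Real.sqrt (κ+st3u s) * Real.sqrt (κ+st3u t)) * (s*t)) := by
  have hA : 0 < κ + st3u s := by have := st3u_nonneg s; linarith
  have hB : 0 < κ + st3u t := by have := st3u_nonneg t; linarith
  have hsA : 0 < Real.sqrt (κ+st3u s) := Real.sqrt_pos.2 hA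
  have hsB : 0 < Real.sqrt (κ+st3u t) := Real.sqrt_pos.2 hB
  have mA := Real.mul_self_sqrt hA.le
  have mB := Real.mul_self_sqrt hB.le
  unfold st3F st3G
  field_simp
  ring_nf
  linear_combination mA + mB


lemma st3_point_le {μ ν s t : ℝ} (hμ : 0 < μ) (hμν : μ < ν) (hs : 0 < s) (ht : 0 < t) :
    st3F ν s * st3G ν t + st3F ν t * st3G ν s ≤
    st3F μ s * st3G μ t + st3F μ t * st3G μ s := by
  have hν : 0 < ν := hμ.trans hμν
  have hA : 0 < μ + st3u s := by have := st3u_nonneg s; linarith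
  have hB : 0 < μ + st3u t := by have := st3u_nonneg t; linarith
  have hA' : 0 < ν + st3u s := by have := st3u_nonneg s; linarith
  have hB' : 0 < ν + st3u t := by have := st3u_nonneg t; linarith
  rw [st3_sum_eq hν hs ht, st3_sum_eq hμ hs ht]
  rw [div_le_div_iff₀ (by positivity) (by positivity)]
  have key := st3_key hμ hμν (st3u_nonneg s) (st3u_nonneg t)
  nlinarith [mul_pos hs ht, mul_le_mul_of_nonneg_right key (mul_pos hs ht).le]

lemma st3_point_lt {μ ν s t : ℝ} (hμ : 0 < μ) (hμν : μ < ν) (hs : 0 < s) (ht : 0 < t)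
    (hst : st3u s ≠ st3u t) :
    st3F ν s * st3G ν t + st3F ν t * st3G ν s <
    st3F μ s * st3G μ t + st3F μ t * st3G μ s := by
  have hν : 0 < ν := hμ.trans hμν
  have hA : 0 < μ + st3u s := by have := st3u_nonneg s; linarith
  have hB : 0 < μ + st3u t := by have := st3u_nonneg t; linarith
  have hA' : 0 < ν + st3u s := by have := st3u_nonneg s; linarith
  have hB' : 0 < ν + st3u t := by have := st3u_nonneg t; linarith
  rw [st3_sum_eq hν hs ht, st3_sum_eq hμ hs ht]
  rw [div_lt_div_iff₀ (by positivity) (by positivity)]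
  have key := st3_key_lt hμ hμν (st3u_nonneg s) (st3u_nonneg t) hst
  nlinarith [mul_pos hs ht, mul_lt_mul_of_pos_right key (mul_pos hs ht)]

lemma st3u_cont : Continuous st3u := by unfold st3u; continuity

lemma st3F_integrable {κ R : ℝ} (hκ : 0 < κ) (hR : 1 < R) :
    IntegrableOn (st3F κ) (Set.Ioc 1 R) := by
  apply (ContinuousOn.integrableOn_Icc ?_).mono_set Set.Ioc_subset_Icc_self
  apply ContinuousOn.div
  · exact (Real.continuous_sqrt.comp (continuous_const.add st3u_cont)).continuousOn
  · exact continuousOn_id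
  · intro x hx
    have h1 : (1:ℝ) ≤ x := hx.1
    show x ≠ 0
    positivity

lemma st3G_integrable {κ R : ℝ} (hκ : 0 < κ) (hR : 1 < R) :
    IntegrableOn (st3G κ) (Set.Ioc 1 R) := by
  apply (ContinuousOn.integrableOn_Icc ?_).mono_set Set.Ioc_subset_Icc_self
  apply ContinuousOn.div continuousOn_const
  · exact (continuous_id.mul
      (Real.continuous_sqrt.comp (continuous_const.add st3u_cont))).continuousOn
  · intro x hx
    have h1 : (1:ℝ) ≤ x := hx.1
    have h2 : 0 < κ + st3u x := by have := st3u_nonneg x; linarith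
    have := Real.sqrt_pos.2 h2
    positivity

theorem stmt_3 (R : ℝ) (hR : 1 < R) :
    StrictAntiOn (fun μ : ℝ =>
      (∫ s in (1:ℝ)..R, Real.sqrt (μ + ((s ^ 2 - 1) ^ 2 + (s - 1) ^ 2)) / s) *
      (∫ s in (1:ℝ)..R, 1 / (s * Real.sqrt (μ + ((s ^ 2 - 1) ^ 2 + (s - 1) ^ 2)))))
      (Set.Ioi 0) := by
  intro μ hμ ν hν hμν
  simp only [Set.mem_Ioi] at hμ hν
  show (∫ s in (1:ℝ)..R, st3F ν s) * (∫ s in (1:ℝ)..R, st3G ν s) <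
       (∫ s in (1:ℝ)..R, st3F μ s) * (∫ s in (1:ℝ)..R, st3G μ s)
  set S : Set ℝ := Set.Ioc 1 R with hS
  set ρ : Measure ℝ := volume.restrict S with hρ
  -- integrability
  have hint1 : ∀ κ, 0 < κ → Integrable (fun z : ℝ × ℝ => st3F κ z.1 * st3G κ z.2)
      (ρ.prod ρ) := fun κ hκ => (st3F_integrable hκ hR).mul_prod (st3G_integrable hκ hR)
  have hint2 : ∀ κ, 0 < κ → Integrable (fun z : ℝ × ℝ => st3F κ z.2 * st3G κ z.1)
      (ρ.prod ρ) := by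
    intro κ hκ
    have := (st3G_integrable hκ hR).mul_prod (st3F_integrable (R := R) hκ hR)
    simpa [mul_comm] using this
  -- product of integrals as double integral
  have heq : ∀ κ, (∫ s in (1:ℝ)..R, st3F κ s) * (∫ s in (1:ℝ)..R, st3G κ s)
      = ∫ z : ℝ × ℝ, st3F κ z.1 * st3G κ z.2 ∂(ρ.prod ρ) := by
    intro κ
    rw [intervalIntegral.integral_of_le hR.le, intervalIntegral.integral_of_le hR.le,
      ← integral_prod_mul]
  -- symmetrization
  have hswap : ∀ κ, ∫ z : ℝ × ℝ, st3F κ z.2 * st3G κ z.1 ∂(ρ.prod ρ)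
      = ∫ z : ℝ × ℝ, st3F κ z.1 * st3G κ z.2 ∂(ρ.prod ρ) :=
    fun κ => integral_prod_swap (fun z : ℝ × ℝ => st3F κ z.1 * st3G κ z.2)
  have hsum : ∀ κ, 0 < κ →
      2 * ((∫ s in (1:ℝ)..R, st3F κ s) * (∫ s in (1:ℝ)..R, st3G κ s))
      = ∫ z : ℝ × ℝ, (st3F κ z.1 * st3G κ z.2 + st3F κ z.2 * st3G κ z.1) ∂(ρ.prod ρ) := by
    intro κ hκ
    rw [integral_add (hint1 κ hκ) (hint2 κ hκ), hswap κ, ← heq κ]; ring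
  -- the difference
  set H : ℝ × ℝ → ℝ := fun z =>
    (st3F μ z.1 * st3G μ z.2 + st3F μ z.2 * st3G μ z.1) -
    (st3F ν z.1 * st3G ν z.2 + st3F ν z.2 * st3G ν z.1) with hH
  have hmeas : ρ.prod ρ = (volume : Measure (ℝ × ℝ)).restrict (S ×ˢ S) := by
    rw [hρ, Measure.prod_restrict, ← Measure.volume_eq_prod]
  have hSmeas : MeasurableSet (S ×ˢ S) := measurableSet_Ioc.prod measurableSet_Ioc
  have hμint : Integrable (fun z : ℝ × ℝ =>
      st3F μ z.1 * st3G μ z.2 + st3F μ z.2 * st3G μ z.1) (ρ.prod ρ) :=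
    (hint1 μ hμ).add (hint2 μ hμ)
  have hνint : Integrable (fun z : ℝ × ℝ =>
      st3F ν z.1 * st3G ν z.2 + st3F ν z.2 * st3G ν z.1) (ρ.prod ρ) :=
    (hint1 ν hν).add (hint2 ν hν)
  have hHint : Integrable H (ρ.prod ρ) := hμint.sub hνint
  have hpos : ∀ z : ℝ × ℝ, z ∈ S ×ˢ S → 0 ≤ H z := by
    intro z hz
    obtain ⟨hz1, hz2⟩ := hz
    have h1 : (0:ℝ) < z.1 := lt_trans one_pos hz1.1
    have h2 : (0:ℝ) < z.2 := lt_trans one_pos hz2.1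
    exact sub_nonneg.2 (st3_point_le hμ hμν h1 h2)
  have hHpos : 0 < ∫ z : ℝ × ℝ, H z ∂(ρ.prod ρ) := by
    rw [hmeas]
    refine (setIntegral_pos_iff_support_of_nonneg_ae ?_ ?_).2 ?_
    · filter_upwards [ae_restrict_mem hSmeas] with z hz using hpos z hz
    · show Integrable H ((volume : Measure (ℝ × ℝ)).restrict (S ×ˢ S))
      rw [← hmeas]; exact hHint
    · set m : ℝ := (1 + R) / 2 with hm
      have hm1 : 1 < m := by rw [hm]; linarith
      have hmR : m < R := by rw [hm]; linarith
      have hsub : Set.Ioo 1 m ×ˢ Set.Ioo m R ⊆ Function.support H ∩ (S ×ˢ S) := by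
        rintro ⟨s, t⟩ ⟨hs, ht⟩
        have hs1 : 1 < s := hs.1
        have hst : s < t := lt_trans hs.2 ht.1
        have hune : st3u s ≠ st3u t := ne_of_lt (st3u_mono hs1.le hst)
        constructor
        · exact ne_of_gt (sub_pos.2 (st3_point_lt hμ hμν (lt_trans one_pos hs1)
            (lt_trans one_pos (lt_trans hs1 hst)) hune))
        · exact ⟨⟨hs1, le_of_lt (lt_of_lt_of_le hs.2 hmR.le)⟩,
            ⟨lt_trans hm1 ht.1, ht.2.le⟩⟩
      refine lt_of_lt_of_le ?_ (measure_mono hsub)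
      rw [Measure.volume_eq_prod, Measure.prod_prod, Real.volume_Ioo, Real.volume_Ioo]
      exact ENNReal.mul_pos (by simp [ENNReal.ofReal_pos]; linarith)
        (by simp [ENNReal.ofReal_pos]; linarith)
  have hfin : ∫ z : ℝ × ℝ, H z ∂(ρ.prod ρ)
      = 2 * ((∫ s in (1:ℝ)..R, st3F μ s) * (∫ s in (1:ℝ)..R, st3G μ s))
      - 2 * ((∫ s in (1:ℝ)..R, st3F ν s) * (∫ s in (1:ℝ)..R, st3G ν s)) := by
    rw [hH, integral_sub hμint hνint, ← hsum μ hμ, ← hsum ν hν]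
  linarith [hHpos, hfin ▸ hHpos]
end

section
/- Let u(s) = (s²-1)² + (s-1)² and for μ > 0 define f(μ) = (∫_1^R √(μ+u(s))/s ds) · (∫_1^R 1/(s√(μ+u(s))) ds), where R > 1. Then f(μ) → (log R)² as μ → ∞ and f(μ) → +∞ as μ → 0⁺. -/
/-- The product of integrals `f(μ)` from the paper. -/
noncomputable def morphF (R μ : ℝ) : ℝ :=
  (∫ s in (1:ℝ)..R, Real.sqrt (μ + ((s ^ 2 - 1) ^ 2 + (s - 1) ^ 2)) / s) *
  (∫ s in (1:ℝ)..R, 1 / (s * Real.sqrt (μ + ((s ^ 2 - 1) ^ 2 + (s - 1) ^ 2))))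

open Real Filter Set intervalIntegral MeasureTheory

namespace Stmt4Aux

noncomputable def u (s : ℝ) : ℝ := (s ^ 2 - 1) ^ 2 + (s - 1) ^ 2

lemma u_nonneg (s : ℝ) : 0 ≤ u s := by unfold u; positivity

lemma u_cont : Continuous u := by unfold u; continuity

lemma intble1 {R μ : ℝ} (hR : 1 ≤ R) :
    IntervalIntegrable (fun s => Real.sqrt (μ + u s) / s) volume 1 R := by
  apply ContinuousOn.intervalIntegrable
  apply ContinuousOn.div
  · exact (Real.continuous_sqrt.comp (continuous_const.add u_cont)).continuousOn
  · exact continuousOn_id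
  · intro x hx h
    rw [Set.uIcc_of_le hR] at hx
    rw [show x = 0 by simpa using h] at hx
    linarith [hx.1]

lemma intble2 {R μ : ℝ} (hR : 1 ≤ R) (hμ : 0 < μ) :
    IntervalIntegrable (fun s => 1 / (s * Real.sqrt (μ + u s))) volume 1 R := by
  apply ContinuousOn.intervalIntegrable
  apply ContinuousOn.div continuousOn_const
  · exact continuousOn_id.mul
      (Real.continuous_sqrt.comp (continuous_const.add u_cont)).continuousOn
  · intro x hx
    rw [Set.uIcc_of_le hR] at hx
    have h1 : (0:ℝ) < x := by linarith [hx.1]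
    have h2 : 0 < Real.sqrt (μ + u x) := Real.sqrt_pos.2 (by linarith [u_nonneg x])
    positivity

lemma intble_c_div {R c : ℝ} (hR : 1 ≤ R) :
    IntervalIntegrable (fun s => c / s) volume 1 R := by
  apply ContinuousOn.intervalIntegrable
  apply ContinuousOn.div continuousOn_const continuousOn_id
  intro x hx h
  rw [Set.uIcc_of_le hR] at hx
  rw [show x = 0 by simpa using h] at hx
  linarith [hx.1]

lemma integral_c_div {R c : ℝ} (hR : 1 < R) :
    (∫ s in (1:ℝ)..R, c / s) = c * Real.log R := by
  have h0 : (0:ℝ) ∉ Set.uIcc 1 R := by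
    rw [Set.uIcc_of_le hR.le]; intro h; linarith [h.1]
  rw [show (fun s : ℝ => c / s) = (fun s : ℝ => c * (1 / s)) by funext s; ring,
    intervalIntegral.integral_const_mul, integral_one_div h0, div_one]

lemma integral_inv_linear {R a b : ℝ} (hR : 1 < R) (ha : 0 < a) (hb : 0 < b) :
    (∫ s in (1:ℝ)..R, (a + b * (s - 1))⁻¹) = b⁻¹ * Real.log ((a + b * (R - 1)) / a) := by
  have h : (fun s : ℝ => (a + b * (s - 1))⁻¹)
      = fun s : ℝ => (fun t : ℝ => t⁻¹) (b * s + (a - b)) := by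
    funext s; ring_nf
  rw [h, intervalIntegral.integral_comp_mul_add (fun t : ℝ => t⁻¹) hb.ne' (a - b)]
  have h0 : (0:ℝ) ∉ Set.uIcc (b * 1 + (a - b)) (b * R + (a - b)) := by
    rw [Set.uIcc_of_le (by nlinarith)]
    intro h; nlinarith [h.1]
  rw [integral_inv h0]
  rw [smul_eq_mul]
  congr 2
  ring_nf

end Stmt4Aux

open Stmt4Aux

theorem stmt_4 (R : ℝ) (hR : 1 < R) :
    Filter.Tendsto (morphF R) Filter.atTop (nhds ((Real.log R) ^ 2)) ∧
    Filter.Tendsto (morphF R) (nhdsWithin 0 (Set.Ioi 0)) Filter.atTop := by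
  have hlogpos : 0 < Real.log R := Real.log_pos hR
  have hmorph : ∀ μ : ℝ, morphF R μ =
      (∫ s in (1:ℝ)..R, Real.sqrt (μ + u s) / s) *
      (∫ s in (1:ℝ)..R, 1 / (s * Real.sqrt (μ + u s))) := fun μ => rfl
  constructor
  · -- μ → ∞
    set B : ℝ := u R with hB
    have hBpos : 0 ≤ B := u_nonneg R
    have huB : ∀ s ∈ Set.Icc (1:ℝ) R, u s ≤ B := by
      intro s hs
      have h1 := hs.1; have h2 := hs.2
      show (s ^ 2 - 1) ^ 2 + (s - 1) ^ 2 ≤ (R ^ 2 - 1) ^ 2 + (R - 1) ^ 2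
      have e1 : (s ^ 2 - 1) ^ 2 ≤ (R ^ 2 - 1) ^ 2 :=
        pow_le_pow_left₀ (by nlinarith) (by nlinarith) 2
      have e2 : (s - 1) ^ 2 ≤ (R - 1) ^ 2 :=
        pow_le_pow_left₀ (by linarith) (by linarith) 2
      linarith
    -- bounds for μ > 0
    have key : ∀ μ : ℝ, 0 < μ →
        (Real.log R) ^ 2 * Real.sqrt (μ / (μ + B)) ≤ morphF R μ ∧
        morphF R μ ≤ (Real.log R) ^ 2 * Real.sqrt ((μ + B) / μ) := by
      intro μ hμ
      have hμB : 0 < μ + B := by linarith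
      have hsμ : 0 < Real.sqrt μ := Real.sqrt_pos.2 hμ
      have hsμB : 0 < Real.sqrt (μ + B) := Real.sqrt_pos.2 hμB
      -- F1 bounds
      have hF1u : (∫ s in (1:ℝ)..R, Real.sqrt (μ + u s) / s)
          ≤ Real.sqrt (μ + B) * Real.log R := by
        rw [← integral_c_div hR]
        apply intervalIntegral.integral_mono_on hR.le (intble1 hR.le) (intble_c_div hR.le)
        intro s hs
        have hs1 : (0:ℝ) < s := by linarith [hs.1]
        gcongr
        exact huB s hs
      have hF1l : Real.sqrt μ * Real.log R
          ≤ (∫ s in (1:ℝ)..R, Real.sqrt (μ + u s) / s) := by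
        rw [← integral_c_div hR]
        apply intervalIntegral.integral_mono_on hR.le (intble_c_div hR.le) (intble1 hR.le)
        intro s hs
        have hs1 : (0:ℝ) < s := by linarith [hs.1]
        gcongr
        linarith [u_nonneg s]
      -- F2 bounds
      have hF2u : (∫ s in (1:ℝ)..R, 1 / (s * Real.sqrt (μ + u s)))
          ≤ Real.log R / Real.sqrt μ := by
        have : Real.log R / Real.sqrt μ = ∫ s in (1:ℝ)..R, (1 / Real.sqrt μ) / s := by
          rw [integral_c_div hR]; ring
        rw [this]
        apply intervalIntegral.integral_mono_on hR.le (intble2 hR.le hμ)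
          (intble_c_div hR.le)
        intro s hs
        have hs1 : (0:ℝ) < s := by linarith [hs.1]
        rw [div_div]
        apply one_div_le_one_div_of_le (by positivity)
        calc Real.sqrt μ * s ≤ Real.sqrt (μ + u s) * s := by
              apply mul_le_mul_of_nonneg_right (Real.sqrt_le_sqrt (by linarith [u_nonneg s])) hs1.le
          _ = s * Real.sqrt (μ + u s) := by ring
      have hF2l : Real.log R / Real.sqrt (μ + B)
          ≤ (∫ s in (1:ℝ)..R, 1 / (s * Real.sqrt (μ + u s))) := by
        have : Real.log R / Real.sqrt (μ + B) = ∫ s in (1:ℝ)..R, (1 / Real.sqrt (μ + B)) / s := by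
          rw [integral_c_div hR]; ring
        rw [this]
        apply intervalIntegral.integral_mono_on hR.le (intble_c_div hR.le) (intble2 hR.le hμ)
        intro s hs
        have hs1 : (0:ℝ) < s := by linarith [hs.1]
        have hsq : 0 < Real.sqrt (μ + u s) := Real.sqrt_pos.2 (by linarith [u_nonneg s])
        rw [div_div]
        apply one_div_le_one_div_of_le (by positivity)
        calc s * Real.sqrt (μ + u s) ≤ s * Real.sqrt (μ + B) := by
              apply mul_le_mul_of_nonneg_left (Real.sqrt_le_sqrt (by linarith [huB s hs])) hs1.le
          _ = Real.sqrt (μ + B) * s := by ring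
      have hF1pos : 0 < (∫ s in (1:ℝ)..R, Real.sqrt (μ + u s) / s) :=
        lt_of_lt_of_le (by positivity) hF1l
      have hF2pos : 0 < (∫ s in (1:ℝ)..R, 1 / (s * Real.sqrt (μ + u s))) :=
        lt_of_lt_of_le (by positivity) hF2l
      constructor
      · have : (Real.log R) ^ 2 * Real.sqrt (μ / (μ + B))
            = (Real.sqrt μ * Real.log R) * (Real.log R / Real.sqrt (μ + B)) := by
          rw [Real.sqrt_div hμ.le]; field_simp
        rw [hmorph, this]
        exact mul_le_mul hF1l hF2l (by positivity) hF1pos.le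
      · have : (Real.log R) ^ 2 * Real.sqrt ((μ + B) / μ)
            = (Real.sqrt (μ + B) * Real.log R) * (Real.log R / Real.sqrt μ) := by
          rw [Real.sqrt_div hμB.le]; field_simp
        rw [hmorph, this]
        exact mul_le_mul hF1u hF2u hF2pos.le (by positivity)
    -- limits of the bounds
    have hquot : Tendsto (fun μ : ℝ => (μ + B) / μ) atTop (nhds 1) := by
      have h1 : Tendsto (fun μ : ℝ => 1 + B / μ) atTop (nhds 1) := by
        simpa using tendsto_const_nhds.add
          (Filter.Tendsto.div_atTop (tendsto_const_nhds (x := B)) tendsto_id)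
      apply h1.congr'
      filter_upwards [eventually_gt_atTop 0] with μ hμ
      field_simp
    have hup : Tendsto (fun μ : ℝ => (Real.log R) ^ 2 * Real.sqrt ((μ + B) / μ)) atTop
        (nhds ((Real.log R) ^ 2)) := by
      have := ((Real.continuous_sqrt.tendsto 1).comp hquot)
      rw [Real.sqrt_one] at this
      simpa using tendsto_const_nhds.mul this
    have hlo : Tendsto (fun μ : ℝ => (Real.log R) ^ 2 * Real.sqrt (μ / (μ + B))) atTop
        (nhds ((Real.log R) ^ 2)) := by
      have hq : Tendsto (fun μ : ℝ => μ / (μ + B)) atTop (nhds 1) := by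
        have := hquot.inv₀ one_ne_zero
        rw [inv_one] at this
        apply this.congr'
        filter_upwards [eventually_gt_atTop 0] with μ hμ
        simp [inv_div]
      have := ((Real.continuous_sqrt.tendsto 1).comp hq)
      rw [Real.sqrt_one] at this
      simpa using tendsto_const_nhds.mul this
    apply tendsto_of_tendsto_of_tendsto_of_le_of_le' hlo hup
    · filter_upwards [eventually_gt_atTop 0] with μ hμ using (key μ hμ).1
    · filter_upwards [eventually_gt_atTop 0] with μ hμ using (key μ hμ).2
  · -- μ → 0⁺
    set C : ℝ := (R + 1) ^ 2 + 1 with hC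
    have hCpos : 0 < C := by positivity
    have hsC : 0 < Real.sqrt C := Real.sqrt_pos.2 hCpos
    -- positive lower bound for F1
    set c0 : ℝ := ∫ s in (1:ℝ)..R, Real.sqrt (u s) / s with hc0
    have hc0pos : 0 < c0 := by
      apply intervalIntegral.intervalIntegral_pos_of_pos_on
      · have : (fun s => Real.sqrt ((0:ℝ) + u s) / s) = fun s => Real.sqrt (u s) / s := by
          funext s; rw [zero_add]
        simpa [this] using intble1 (μ := 0) hR.le
      · intro x hx
        have h1 : (0:ℝ) < x := by linarith [hx.1]
        have h2 : 0 < u x := by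
          unfold u; nlinarith [sq_nonneg (x ^ 2 - 1), hx.1, hx.2]
        positivity
      · exact hR
    -- key lower bound for morphF
    have key : ∀ μ : ℝ, 0 < μ →
        c0 * ((R * Real.sqrt C)⁻¹ *
          Real.log ((Real.sqrt μ + Real.sqrt C * (R - 1)) / Real.sqrt μ)) ≤ morphF R μ := by
      intro μ hμ
      have hsμ : 0 < Real.sqrt μ := Real.sqrt_pos.2 hμ
      -- F1 lower bound
      have hF1l : c0 ≤ (∫ s in (1:ℝ)..R, Real.sqrt (μ + u s) / s) := by
        rw [hc0]
        apply intervalIntegral.integral_mono_on hR.le _ (intble1 hR.le)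
        · intro s hs
          have hs1 : (0:ℝ) < s := by linarith [hs.1]
          gcongr
          linarith
        · have : (fun s => Real.sqrt ((0:ℝ) + u s) / s) = fun s => Real.sqrt (u s) / s := by
            funext s; rw [zero_add]
          simpa [this] using intble1 (μ := 0) (R := R) hR.le
      -- F2 lower bound
      have hlin : IntervalIntegrable
          (fun s => R⁻¹ * (Real.sqrt μ + Real.sqrt C * (s - 1))⁻¹) volume 1 R := by
        apply ContinuousOn.intervalIntegrable
        apply ContinuousOn.mul continuousOn_const
        apply ContinuousOn.inv₀
        · exact (continuous_const.add
            (continuous_const.mul (continuous_id.sub continuous_const))).continuousOn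
        · intro x hx
          rw [Set.uIcc_of_le hR.le] at hx
          have : 0 ≤ Real.sqrt C * (x - 1) := by
            apply mul_nonneg hsC.le; linarith [hx.1]
          positivity
      have hF2l : (R * Real.sqrt C)⁻¹ *
            Real.log ((Real.sqrt μ + Real.sqrt C * (R - 1)) / Real.sqrt μ)
          ≤ (∫ s in (1:ℝ)..R, 1 / (s * Real.sqrt (μ + u s))) := by
        have heq : (∫ s in (1:ℝ)..R,
            R⁻¹ * (Real.sqrt μ + Real.sqrt C * (s - 1))⁻¹)
            = (R * Real.sqrt C)⁻¹ *
              Real.log ((Real.sqrt μ + Real.sqrt C * (R - 1)) / Real.sqrt μ) := by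
          rw [intervalIntegral.integral_const_mul,
            integral_inv_linear hR hsμ hsC, mul_inv]
          ring
        rw [← heq]
        apply intervalIntegral.integral_mono_on hR.le hlin (intble2 hR.le hμ)
        intro s hs
        have hs1 : (0:ℝ) < s := by linarith [hs.1]
        have hsm1 : (0:ℝ) ≤ s - 1 := by linarith [hs.1]
        have hbound : Real.sqrt (μ + u s) ≤ Real.sqrt μ + Real.sqrt C * (s - 1) := by
          have h1 : μ + u s ≤ (Real.sqrt μ + Real.sqrt C * (s - 1)) ^ 2 := by
            have hsqC : Real.sqrt C ^ 2 = C := Real.sq_sqrt hCpos.le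
            have hsqμ : Real.sqrt μ ^ 2 = μ := Real.sq_sqrt hμ.le
            have hu : u s ≤ C * (s - 1) ^ 2 := by
              have h2 : (s + 1) ^ 2 ≤ (R + 1) ^ 2 :=
                pow_le_pow_left₀ (by linarith [hs.1]) (by linarith [hs.2]) 2
              have h3 := mul_le_mul_of_nonneg_right h2 (sq_nonneg (s - 1))
              show (s ^ 2 - 1) ^ 2 + (s - 1) ^ 2 ≤ ((R + 1) ^ 2 + 1) * (s - 1) ^ 2
              nlinarith [h3]
            nlinarith [mul_nonneg hsμ.le (mul_nonneg hsC.le hsm1)]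
          calc Real.sqrt (μ + u s) ≤ Real.sqrt ((Real.sqrt μ + Real.sqrt C * (s - 1)) ^ 2) :=
                Real.sqrt_le_sqrt h1
            _ = Real.sqrt μ + Real.sqrt C * (s - 1) := Real.sqrt_sq (by positivity)
        have hpos1 : 0 < s * Real.sqrt (μ + u s) := by
          have : 0 < Real.sqrt (μ + u s) := Real.sqrt_pos.2 (by linarith [u_nonneg s])
          positivity
        have hRden : 0 < R * (Real.sqrt μ + Real.sqrt C * (s - 1)) := by
          have : 0 ≤ Real.sqrt C * (s - 1) := mul_nonneg hsC.le hsm1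
          have hR0 : (0:ℝ) < R := by linarith
          positivity
        rw [← mul_inv, inv_eq_one_div, div_le_div_iff₀ hRden hpos1, one_mul, one_mul]
        exact mul_le_mul hs.2 hbound (Real.sqrt_nonneg _) (by linarith)
      -- combine
      rw [hmorph]
      have hlognn : 0 ≤ Real.log ((Real.sqrt μ + Real.sqrt C * (R - 1)) / Real.sqrt μ) := by
        apply Real.log_nonneg
        rw [le_div_iff₀ hsμ, one_mul]
        nlinarith [mul_nonneg hsC.le (by linarith : (0:ℝ) ≤ R - 1)]
      have hF1pos : (0:ℝ) ≤ (∫ s in (1:ℝ)..R, Real.sqrt (μ + u s) / s) := by linarith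
      apply mul_le_mul hF1l hF2l (by positivity) hF1pos
    -- the lower bound tends to atTop
    have htend : Tendsto (fun μ : ℝ => c0 * ((R * Real.sqrt C)⁻¹ *
        Real.log ((Real.sqrt μ + Real.sqrt C * (R - 1)) / Real.sqrt μ)))
        (nhdsWithin 0 (Set.Ioi 0)) atTop := by
      have hk : 0 < Real.sqrt C * (R - 1) := by
        apply mul_pos hsC; linarith
      have hsqrt0 : Tendsto Real.sqrt (nhdsWithin 0 (Set.Ioi 0)) (nhdsWithin 0 (Set.Ioi 0)) := by
        apply tendsto_nhdsWithin_of_tendsto_nhds_of_eventually_within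
        · have := Real.continuous_sqrt.tendsto 0
          rw [Real.sqrt_zero] at this
          exact this.mono_left nhdsWithin_le_nhds
        · filter_upwards [self_mem_nhdsWithin] with x hx
          exact Real.sqrt_pos.2 hx
      have hinv : Tendsto (fun μ : ℝ => Real.sqrt C * (R - 1) * (Real.sqrt μ)⁻¹)
          (nhdsWithin 0 (Set.Ioi 0)) atTop :=
        (tendsto_inv_nhdsGT_zero.comp hsqrt0).const_mul_atTop hk
      have harg : Tendsto (fun μ : ℝ => (Real.sqrt μ + Real.sqrt C * (R - 1)) / Real.sqrt μ)
          (nhdsWithin 0 (Set.Ioi 0)) atTop := by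
        apply Tendsto.congr' _ (tendsto_atTop_add_const_left _ 1 hinv)
        filter_upwards [self_mem_nhdsWithin] with μ hμ
        have hsμ : Real.sqrt μ ≠ 0 := (Real.sqrt_pos.2 hμ).ne'
        field_simp
      have := Real.tendsto_log_atTop.comp harg
      exact (this.const_mul_atTop (by positivity)).const_mul_atTop hc0pos
    exact tendsto_atTop_mono' _ (by filter_upwards [self_mem_nhdsWithin] with μ hμ using key μ hμ)
      htend
end

section
/- Let R > 1 and A > (log R)². With u(s) = (s²-1)² + (s-1)² and f(μ) = (∫_1^R √(μ+u(s))/s ds)(∫_1^R ds/(s√(μ+u(s)))), there exists a unique μ > 0 with f(μ) = A. -/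
open MeasureTheory Real Set Filter intervalIntegral

namespace Stmt5Aux

noncomputable def uu (s : ℝ) : ℝ := (s ^ 2 - 1) ^ 2 + (s - 1) ^ 2

lemma uu_nonneg (s : ℝ) : 0 ≤ uu s := by unfold uu; positivity

lemma uu_cont : Continuous uu := by unfold uu; continuity

lemma add_uu_pos {μ : ℝ} (hμ : 0 < μ) (s : ℝ) : 0 < μ + uu s :=
  lt_add_of_lt_of_nonneg hμ (uu_nonneg s)

lemma uu_lt {s t : ℝ} (hs : 1 ≤ s) (hst : s < t) : uu s < uu t := by
  have h0 : 0 ≤ s ^ 2 - 1 := by nlinarith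
  have h1 : (s ^ 2 - 1) ^ 2 < (t ^ 2 - 1) ^ 2 :=
    pow_lt_pow_left₀ (by nlinarith) h0 two_ne_zero
  have h2 : (s - 1) ^ 2 ≤ (t - 1) ^ 2 := by nlinarith
  unfold uu; linarith

lemma uu_mono {s t : ℝ} (hs : 1 ≤ s) (hst : s ≤ t) : uu s ≤ uu t := by
  rcases eq_or_lt_of_le hst with rfl | h
  · exact le_refl _
  · exact (uu_lt hs h).le

lemma sqrt_add_le {x y : ℝ} (hx : 0 ≤ x) (hy : 0 ≤ y) :
    Real.sqrt (x + y) ≤ Real.sqrt x + Real.sqrt y := by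
  have h1 : x + y ≤ (Real.sqrt x + Real.sqrt y) ^ 2 := by
    nlinarith [Real.sq_sqrt hx, Real.sq_sqrt hy, Real.sqrt_nonneg x, Real.sqrt_nonneg y]
  calc Real.sqrt (x + y) ≤ Real.sqrt ((Real.sqrt x + Real.sqrt y) ^ 2) := Real.sqrt_le_sqrt h1
    _ = Real.sqrt x + Real.sqrt y := Real.sqrt_sq (by positivity)

noncomputable def g1 (μ s : ℝ) : ℝ := Real.sqrt (μ + uu s) / s
noncomputable def g2 (μ s : ℝ) : ℝ := 1 / (s * Real.sqrt (μ + uu s))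

lemma morphF_eq {R μ : ℝ} (hR : (1:ℝ) ≤ R) :
    morphF R μ = (∫ s in Ioc (1:ℝ) R, g1 μ s) * (∫ s in Ioc (1:ℝ) R, g2 μ s) := by
  unfold morphF g1 g2 uu
  rw [integral_of_le hR, integral_of_le hR]

lemma g1_contOn {μ R : ℝ} : ContinuousOn (g1 μ) (Icc 1 R) := by
  apply ContinuousOn.div
  · exact (Real.continuous_sqrt.comp (continuous_const.add uu_cont)).continuousOn
  · exact continuousOn_id
  · intro s hs; exact ne_of_gt (lt_of_lt_of_le one_pos hs.1)

lemma g2_contOn {μ R : ℝ} (hμ : 0 < μ) : ContinuousOn (g2 μ) (Icc 1 R) := by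
  apply ContinuousOn.div continuousOn_const
  · exact (continuousOn_id.mul
      (Real.continuous_sqrt.comp (continuous_const.add uu_cont)).continuousOn)
  · intro s hs
    have h1 : (0:ℝ) < s := lt_of_lt_of_le one_pos hs.1
    have h2 : 0 < Real.sqrt (μ + uu s) := Real.sqrt_pos.2 (add_uu_pos hμ s)
    positivity

lemma g1_int {μ R : ℝ} : IntegrableOn (g1 μ) (Ioc 1 R) :=
  (g1_contOn.integrableOn_Icc).mono_set Ioc_subset_Icc_self

lemma g2_int {μ R : ℝ} (hμ : 0 < μ) : IntegrableOn (g2 μ) (Ioc 1 R) :=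
  ((g2_contOn hμ).integrableOn_Icc).mono_set Ioc_subset_Icc_self

lemma g1_nonneg {μ s : ℝ} (hs : 0 < s) : 0 ≤ g1 μ s := by
  unfold g1; positivity

lemma g2_nonneg {μ s : ℝ} (hs : 0 < s) : 0 ≤ g2 μ s := by
  unfold g2; positivity

end Stmt5Aux
namespace Stmt5Aux
open Real Set

noncomputable def phi (μ a b : ℝ) : ℝ :=
  Real.sqrt (μ + a) / Real.sqrt (μ + b) + Real.sqrt (μ + b) / Real.sqrt (μ + a)

lemma phi_pos {μ a b : ℝ} (hμa : 0 < μ + a) (hμb : 0 < μ + b) : 0 < phi μ a b := by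
  have ha := Real.sqrt_pos.2 hμa
  have hb := Real.sqrt_pos.2 hμb
  unfold phi; positivity

lemma phi_sq {μ a b : ℝ} (hμa : 0 < μ + a) (hμb : 0 < μ + b) :
    (phi μ a b) ^ 2 = 4 + (a - b) ^ 2 / ((μ + a) * (μ + b)) := by
  have ha := Real.sqrt_pos.2 hμa
  have hb := Real.sqrt_pos.2 hμb
  have sa : Real.sqrt (μ + a) ^ 2 = μ + a := Real.sq_sqrt hμa.le
  have sb : Real.sqrt (μ + b) ^ 2 = μ + b := Real.sq_sqrt hμb.le
  unfold phi
  field_simp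
  rw [sb, sa]; ring

lemma phi_anti {μ1 μ2 a b : ℝ} (h1 : 0 < μ1) (h12 : μ1 ≤ μ2) (ha : 0 ≤ a) (hb : 0 ≤ b) :
    phi μ2 a b ≤ phi μ1 a b := by
  have h2 : 0 < μ2 := lt_of_lt_of_le h1 h12
  have p1a : 0 < μ1 + a := by linarith
  have p1b : 0 < μ1 + b := by linarith
  have p2a : 0 < μ2 + a := by linarith
  have p2b : 0 < μ2 + b := by linarith
  have hsq : (phi μ2 a b) ^ 2 ≤ (phi μ1 a b) ^ 2 := by
    rw [phi_sq p1a p1b, phi_sq p2a p2b]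
    have : (a - b) ^ 2 / ((μ2 + a) * (μ2 + b)) ≤ (a - b) ^ 2 / ((μ1 + a) * (μ1 + b)) := by
      apply div_le_div_of_nonneg_left (sq_nonneg _) (by positivity)
      nlinarith
    linarith
  exact (pow_le_pow_iff_left₀ (phi_pos p2a p2b).le (phi_pos p1a p1b).le two_ne_zero).1 hsq

lemma phi_strict_anti {μ1 μ2 a b : ℝ} (h1 : 0 < μ1) (h12 : μ1 < μ2) (ha : 0 ≤ a) (hb : 0 ≤ b)
    (hab : a ≠ b) : phi μ2 a b < phi μ1 a b := by
  have h2 : 0 < μ2 := lt_trans h1 h12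
  have p1a : 0 < μ1 + a := by linarith
  have p1b : 0 < μ1 + b := by linarith
  have p2a : 0 < μ2 + a := by linarith
  have p2b : 0 < μ2 + b := by linarith
  have hsq : (phi μ2 a b) ^ 2 < (phi μ1 a b) ^ 2 := by
    rw [phi_sq p1a p1b, phi_sq p2a p2b]
    have hne : a - b ≠ 0 := sub_ne_zero.2 hab
    have hab2 : 0 < (a - b) ^ 2 := by positivity
    have : (a - b) ^ 2 / ((μ2 + a) * (μ2 + b)) < (a - b) ^ 2 / ((μ1 + a) * (μ1 + b)) := by
      apply div_lt_div_of_pos_left hab2 (by positivity)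
      nlinarith
    linarith
  exact lt_of_pow_lt_pow_left₀ 2 (phi_pos p1a p1b).le hsq

end Stmt5Aux
namespace Stmt5Aux
open MeasureTheory Real Set Filter

noncomputable def PP (R : ℝ) : Measure ℝ := volume.restrict (Ioc 1 R)

instance {R : ℝ} : SFinite (PP R) := by unfold PP; infer_instance

instance {R : ℝ} : IsFiniteMeasure (PP R) := by
  unfold PP
  exact ⟨by rw [Measure.restrict_apply_univ, Real.volume_Ioc]; exact ENNReal.ofReal_lt_top⟩

noncomputable def H (μ : ℝ) (p : ℝ × ℝ) : ℝ := g1 μ p.1 * g2 μ p.2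
noncomputable def Hs (μ : ℝ) (p : ℝ × ℝ) : ℝ := g2 μ p.1 * g1 μ p.2

lemma H_int {μ R : ℝ} (hμ : 0 < μ) : Integrable (H μ) ((PP R).prod (PP R)) :=
  Integrable.mul_prod g1_int (g2_int hμ)

lemma Hs_int {μ R : ℝ} (hμ : 0 < μ) : Integrable (Hs μ) ((PP R).prod (PP R)) :=
  Integrable.mul_prod (g2_int hμ) g1_int

lemma H_add_swap {μ s t : ℝ} (hμ : 0 < μ) (hs : 0 < s) (ht : 0 < t) :
    H μ (s, t) + Hs μ (s, t) = phi μ (uu s) (uu t) / (s * t) := by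
  have h1 : 0 < Real.sqrt (μ + uu s) := Real.sqrt_pos.2 (add_uu_pos hμ s)
  have h2 : 0 < Real.sqrt (μ + uu t) := Real.sqrt_pos.2 (add_uu_pos hμ t)
  unfold H Hs g1 g2 phi
  field_simp

lemma morphF_double {R μ : ℝ} (hR : (1:ℝ) ≤ R) (hμ : 0 < μ) :
    morphF R μ = (1/2) * ∫ p, (H μ p + Hs μ p) ∂((PP R).prod (PP R)) := by
  rw [integral_add (H_int hμ) (Hs_int hμ)]
  have h1 : ∫ p, H μ p ∂((PP R).prod (PP R))
      = (∫ s, g1 μ s ∂(PP R)) * (∫ s, g2 μ s ∂(PP R)) := integral_prod_mul _ _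
  have h2 : ∫ p, Hs μ p ∂((PP R).prod (PP R))
      = (∫ s, g2 μ s ∂(PP R)) * (∫ s, g1 μ s ∂(PP R)) := integral_prod_mul _ _
  rw [h1, h2, morphF_eq hR]
  unfold PP
  ring

lemma morphF_strictAnti {R : ℝ} (hR : 1 < R) {μ1 μ2 : ℝ} (h1 : 0 < μ1) (h12 : μ1 < μ2) :
    morphF R μ2 < morphF R μ1 := by
  have h2 : 0 < μ2 := lt_trans h1 h12
  set m : ℝ := (1 + R) / 2 with hm
  have hm1 : 1 < m := by rw [hm]; linarith
  have hmR : m < R := by rw [hm]; linarith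
  set G : ℝ × ℝ → ℝ := fun p => (H μ1 p + Hs μ1 p) - (H μ2 p + Hs μ2 p) with hG
  have hGint : Integrable G ((PP R).prod (PP R)) :=
    ((H_int h1).add (Hs_int h1)).sub ((H_int h2).add (Hs_int h2))
  have hset : ∀ᵐ p ∂((PP R).prod (PP R)), p ∈ Ioc (1:ℝ) R ×ˢ Ioc (1:ℝ) R := by
    unfold PP
    rw [Measure.prod_restrict]
    exact ae_restrict_mem (measurableSet_Ioc.prod measurableSet_Ioc)
  have hGval : ∀ p : ℝ × ℝ, 0 < p.1 → 0 < p.2 →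
      G p = (phi μ1 (uu p.1) (uu p.2) - phi μ2 (uu p.1) (uu p.2)) / (p.1 * p.2) := by
    intro p hs ht
    have e1 : H μ1 p + Hs μ1 p = phi μ1 (uu p.1) (uu p.2) / (p.1 * p.2) := by
      rw [show p = (p.1, p.2) from rfl]; exact H_add_swap h1 hs ht
    have e2 : H μ2 p + Hs μ2 p = phi μ2 (uu p.1) (uu p.2) / (p.1 * p.2) := by
      rw [show p = (p.1, p.2) from rfl]; exact H_add_swap h2 hs ht
    rw [hG]; simp only; rw [e1, e2, sub_div]
  have hGnonneg : 0 ≤ᵐ[((PP R).prod (PP R))] G := by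
    filter_upwards [hset] with p hp
    have hs : (0:ℝ) < p.1 := lt_trans one_pos hp.1.1
    have ht : (0:ℝ) < p.2 := lt_trans one_pos hp.2.1
    rw [hGval p hs ht]
    exact div_nonneg (sub_nonneg.2 (phi_anti h1 h12.le (uu_nonneg _) (uu_nonneg _)))
      (by positivity)
  have hsupp : Ioc (1:ℝ) m ×ˢ Ioc m R ⊆ Function.support G := by
    intro p hp
    have hs1 : (1:ℝ) < p.1 := hp.1.1
    have hs : (0:ℝ) < p.1 := lt_trans one_pos hs1
    have ht : (0:ℝ) < p.2 := lt_trans one_pos (lt_trans hm1 hp.2.1)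
    have hne : uu p.1 ≠ uu p.2 :=
      ne_of_lt (uu_lt hs1.le (lt_of_le_of_lt hp.1.2 hp.2.1))
    have hphi : phi μ2 (uu p.1) (uu p.2) < phi μ1 (uu p.1) (uu p.2) :=
      phi_strict_anti h1 h12 (uu_nonneg _) (uu_nonneg _) hne
    have : 0 < G p := by
      rw [hGval p hs ht]
      exact div_pos (sub_pos.2 hphi) (by positivity)
    exact Function.mem_support.2 (ne_of_gt this)
  have hmeas : 0 < ((PP R).prod (PP R)) (Function.support G) := by
    refine lt_of_lt_of_le ?_ (measure_mono hsupp)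
    rw [Measure.prod_prod]
    have e1 : PP R (Ioc 1 m) = ENNReal.ofReal (m - 1) := by
      unfold PP
      rw [Measure.restrict_apply measurableSet_Ioc,
        inter_eq_left.2 (Ioc_subset_Ioc le_rfl hmR.le), Real.volume_Ioc]
    have e2 : PP R (Ioc m R) = ENNReal.ofReal (R - m) := by
      unfold PP
      rw [Measure.restrict_apply measurableSet_Ioc,
        inter_eq_left.2 (Ioc_subset_Ioc hm1.le le_rfl), Real.volume_Ioc]
    rw [e1, e2]
    exact ENNReal.mul_pos (by simp [ENNReal.ofReal_pos]; linarith)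
      (by simp [ENNReal.ofReal_pos]; linarith)
  have key : 0 < ∫ p, G p ∂((PP R).prod (PP R)) :=
    (integral_pos_iff_support_of_nonneg_ae hGnonneg hGint).2 hmeas
  have hsub : ∫ p, G p ∂((PP R).prod (PP R))
      = (∫ p, (H μ1 p + Hs μ1 p) ∂((PP R).prod (PP R)))
        - ∫ p, (H μ2 p + Hs μ2 p) ∂((PP R).prod (PP R)) :=
    integral_sub ((H_int h1).add (Hs_int h1)) ((H_int h2).add (Hs_int h2))
  rw [morphF_double hR.le h1, morphF_double hR.le h2]
  rw [hsub] at key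
  linarith

end Stmt5Aux
namespace Stmt5Aux
open MeasureTheory Real Set Filter

lemma g1_meas {μ R : ℝ} : AEStronglyMeasurable (g1 μ) (PP R) := by
  have : Continuous fun s => Real.sqrt (μ + uu s) :=
    Real.continuous_sqrt.comp (continuous_const.add uu_cont)
  exact ((this.measurable.div measurable_id).aestronglyMeasurable)

lemma g2_meas {μ R : ℝ} : AEStronglyMeasurable (g2 μ) (PP R) := by
  have : Continuous fun s => s * Real.sqrt (μ + uu s) :=
    continuous_id.mul (Real.continuous_sqrt.comp (continuous_const.add uu_cont))
  exact ((measurable_const.div this.measurable).aestronglyMeasurable)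

lemma ae_mem_Ioc {R : ℝ} : ∀ᵐ s ∂(PP R), s ∈ Ioc (1:ℝ) R := by
  unfold PP; exact ae_restrict_mem measurableSet_Ioc

lemma int_g1_contAt {R : ℝ} {μ0 : ℝ} (hμ0 : 0 < μ0) :
    ContinuousAt (fun μ => ∫ s, g1 μ s ∂(PP R)) μ0 := by
  apply continuousAt_of_dominated (bound := fun _ => Real.sqrt (2 * μ0 + uu R))
  · exact Eventually.of_forall fun μ => g1_meas
  · filter_upwards [Ioo_mem_nhds (show μ0 / 2 < μ0 by linarith) (show μ0 < 2 * μ0 by linarith)] with μ hμ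
    filter_upwards [ae_mem_Ioc] with s hs
    have hs0 : (0:ℝ) < s := lt_trans one_pos hs.1
    have h1 : 0 ≤ g1 μ s := g1_nonneg hs0
    rw [Real.norm_eq_abs, abs_of_nonneg h1]
    unfold g1
    have hus : uu s ≤ uu R := uu_mono hs.1.le hs.2
    calc Real.sqrt (μ + uu s) / s ≤ Real.sqrt (μ + uu s) / 1 := by
          apply div_le_div_of_nonneg_left (Real.sqrt_nonneg _) one_pos hs.1.le
      _ = Real.sqrt (μ + uu s) := div_one _
      _ ≤ Real.sqrt (2 * μ0 + uu R) := Real.sqrt_le_sqrt (by linarith [hμ.2])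
  · exact integrable_const _
  · refine Eventually.of_forall fun s => ?_
    have : Continuous fun μ => Real.sqrt (μ + uu s) / s :=
      (Real.continuous_sqrt.comp (continuous_id.add continuous_const)).div_const s
    exact this.continuousAt

lemma int_g2_contAt {R : ℝ} {μ0 : ℝ} (hμ0 : 0 < μ0) :
    ContinuousAt (fun μ => ∫ s, g2 μ s ∂(PP R)) μ0 := by
  apply continuousAt_of_dominated (bound := fun _ => 1 / Real.sqrt (μ0 / 2))
  · exact Eventually.of_forall fun μ => g2_meas
  · filter_upwards [Ioo_mem_nhds (show μ0 / 2 < μ0 by linarith) (show μ0 < 2 * μ0 by linarith)] with μ hμ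
    filter_upwards [ae_mem_Ioc] with s hs
    have hs0 : (0:ℝ) < s := lt_trans one_pos hs.1
    have hμpos : 0 < μ := lt_trans (half_pos hμ0) hμ.1
    have h1 : 0 ≤ g2 μ s := g2_nonneg hs0
    rw [Real.norm_eq_abs, abs_of_nonneg h1]
    unfold g2
    have hsq : Real.sqrt (μ0 / 2) ≤ s * Real.sqrt (μ + uu s) := by
      calc Real.sqrt (μ0 / 2) ≤ Real.sqrt (μ + uu s) :=
            Real.sqrt_le_sqrt (by linarith [hμ.1, uu_nonneg s])
        _ = 1 * Real.sqrt (μ + uu s) := (one_mul _).symm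
        _ ≤ s * Real.sqrt (μ + uu s) :=
            mul_le_mul_of_nonneg_right hs.1.le (Real.sqrt_nonneg _)
    exact one_div_le_one_div_of_le (Real.sqrt_pos.2 (half_pos hμ0)) hsq
  · exact integrable_const _
  · filter_upwards [ae_mem_Ioc] with s hs
    have hs0 : (0:ℝ) < s := lt_trans one_pos hs.1
    have hden : Continuous fun μ => s * Real.sqrt (μ + uu s) :=
      continuous_const.mul (Real.continuous_sqrt.comp (continuous_id.add continuous_const))
    apply ContinuousAt.div continuousAt_const hden.continuousAt
    have : 0 < Real.sqrt (μ0 + uu s) := Real.sqrt_pos.2 (add_uu_pos hμ0 s)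
    positivity

lemma morphF_contAt {R μ0 : ℝ} (hR : (1:ℝ) ≤ R) (hμ0 : 0 < μ0) :
    ContinuousAt (morphF R) μ0 := by
  have he : morphF R = fun μ => (∫ s, g1 μ s ∂(PP R)) * (∫ s, g2 μ s ∂(PP R)) :=
    funext fun μ => morphF_eq hR
  rw [he]
  exact (int_g1_contAt hμ0).mul (int_g2_contAt hμ0)

end Stmt5Aux
namespace Stmt5Aux
open MeasureTheory Real Set Filter intervalIntegral

lemma inv_contOn {R : ℝ} : ContinuousOn (fun s : ℝ => 1 / s) (Icc 1 R) :=
  ContinuousOn.div continuousOn_const continuousOn_id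
    (fun s hs => ne_of_gt (lt_of_lt_of_le one_pos hs.1))

lemma inv_int {R : ℝ} : IntegrableOn (fun s : ℝ => 1 / s) (Ioc 1 R) :=
  (inv_contOn.integrableOn_Icc).mono_set Ioc_subset_Icc_self

lemma int_inv {R : ℝ} (hR : (1:ℝ) ≤ R) :
    ∫ s in Ioc (1:ℝ) R, 1 / s = Real.log R := by
  rw [← integral_of_le hR, integral_one_div]
  · rw [div_one]
  · intro h
    rcases h with ⟨h1, _⟩
    simp only [inf_le_iff] at h1
    rcases h1 with h | h <;> linarith

lemma int_g1_upper {R μ : ℝ} (hR : (1:ℝ) ≤ R) (hμ : 0 < μ) :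
    ∫ s, g1 μ s ∂(PP R) ≤ Real.sqrt (μ + uu R) * Real.log R := by
  have hb : ∫ s in Ioc (1:ℝ) R, Real.sqrt (μ + uu R) * (1 / s)
      = Real.sqrt (μ + uu R) * Real.log R := by
    rw [MeasureTheory.integral_const_mul, int_inv hR]
  rw [show (∫ s, g1 μ s ∂(PP R)) = ∫ s in Ioc (1:ℝ) R, g1 μ s from rfl, ← hb]
  apply setIntegral_mono_on g1_int (inv_int.const_mul _) measurableSet_Ioc
  intro s hs
  have hs0 : (0:ℝ) < s := lt_trans one_pos hs.1
  unfold g1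
  rw [mul_one_div]
  gcongr
  exact uu_mono hs.1.le hs.2

lemma int_g2_upper {R μ : ℝ} (hR : (1:ℝ) ≤ R) (hμ : 0 < μ) :
    ∫ s, g2 μ s ∂(PP R) ≤ (1 / Real.sqrt μ) * Real.log R := by
  have hb : ∫ s in Ioc (1:ℝ) R, (1 / Real.sqrt μ) * (1 / s)
      = (1 / Real.sqrt μ) * Real.log R := by
    rw [MeasureTheory.integral_const_mul, int_inv hR]
  rw [show (∫ s, g2 μ s ∂(PP R)) = ∫ s in Ioc (1:ℝ) R, g2 μ s from rfl, ← hb]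
  apply setIntegral_mono_on (g2_int hμ) (inv_int.const_mul _) measurableSet_Ioc
  intro s hs
  have hs0 : (0:ℝ) < s := lt_trans one_pos hs.1
  have hsqμ : 0 < Real.sqrt μ := Real.sqrt_pos.2 hμ
  unfold g2
  rw [one_div_mul_one_div]
  apply one_div_le_one_div_of_le (by positivity)
  calc Real.sqrt μ * s = s * Real.sqrt μ := mul_comm _ _
    _ ≤ s * Real.sqrt (μ + uu s) :=
      mul_le_mul_of_nonneg_left
        (Real.sqrt_le_sqrt (le_add_of_nonneg_right (uu_nonneg s))) hs0.le

lemma int_g1_nonneg {R μ : ℝ} : 0 ≤ ∫ s, g1 μ s ∂(PP R) := by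
  apply setIntegral_nonneg measurableSet_Ioc
  intro s hs; exact g1_nonneg (lt_trans one_pos hs.1)

lemma int_g2_nonneg {R μ : ℝ} : 0 ≤ ∫ s, g2 μ s ∂(PP R) := by
  apply setIntegral_nonneg measurableSet_Ioc
  intro s hs; exact g2_nonneg (lt_trans one_pos hs.1)

lemma morphF_upper {R μ : ℝ} (hR : (1:ℝ) ≤ R) (hμ : 0 < μ) :
    morphF R μ ≤ (Real.sqrt (μ + uu R) * Real.log R) * ((1 / Real.sqrt μ) * Real.log R) := by
  rw [morphF_eq hR]
  have h1 := int_g1_upper (μ := μ) hR hμ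
  have h2 := int_g2_upper (μ := μ) hR hμ
  have hL : 0 ≤ Real.log R := Real.log_nonneg hR
  have hsq : 0 < Real.sqrt μ := Real.sqrt_pos.2 hμ
  apply mul_le_mul h1 h2 int_g2_nonneg (by positivity)

end Stmt5Aux
namespace Stmt5Aux
open MeasureTheory Real Set Filter intervalIntegral

lemma uu_one : uu 1 = 0 := by unfold uu; norm_num

noncomputable def c1 (R : ℝ) : ℝ := ∫ s in Ioc (1:ℝ) R, Real.sqrt (uu s) / s

lemma sqrtuu_contOn {R : ℝ} : ContinuousOn (fun s => Real.sqrt (uu s) / s) (Icc 1 R) :=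
  ContinuousOn.div (Real.continuous_sqrt.comp uu_cont).continuousOn continuousOn_id
    (fun s hs => ne_of_gt (lt_of_lt_of_le one_pos hs.1))

lemma c1_int {R : ℝ} : IntegrableOn (fun s => Real.sqrt (uu s) / s) (Ioc 1 R) :=
  (sqrtuu_contOn.integrableOn_Icc).mono_set Ioc_subset_Icc_self

lemma c1_pos {R : ℝ} (hR : 1 < R) : 0 < c1 R := by
  unfold c1
  rw [← integral_of_le hR.le]
  apply intervalIntegral_pos_of_pos_on
  · apply ContinuousOn.intervalIntegrable
    rw [uIcc_of_le hR.le]; exact sqrtuu_contOn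
  · intro x hx
    have h0 : 0 < uu x := by
      have := uu_lt (le_refl 1) hx.1
      rwa [uu_one] at this
    have : 0 < Real.sqrt (uu x) := Real.sqrt_pos.2 h0
    exact div_pos this (lt_trans one_pos hx.1)
  · exact hR

lemma int_g1_lower {R μ : ℝ} (hμ : 0 < μ) : c1 R ≤ ∫ s, g1 μ s ∂(PP R) := by
  apply setIntegral_mono_on c1_int g1_int measurableSet_Ioc
  intro s hs
  unfold g1
  gcongr
  · exact (lt_trans one_pos hs.1).le
  · linarith [uu_nonneg s]

lemma sqrt_uu_le {R s : ℝ} (hs : 1 ≤ s) (hsR : s ≤ R) :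
    Real.sqrt (uu s) ≤ Real.sqrt ((R + 1) ^ 2 + 1) * (s - 1) := by
  have h : uu s = ((s + 1) ^ 2 + 1) * (s - 1) ^ 2 := by unfold uu; ring
  rw [h, Real.sqrt_mul (by positivity), Real.sqrt_sq (by linarith)]
  gcongr

lemma g2_lower_ptwise {R μ a s : ℝ} (hμ : 0 < μ) (ha : 0 < a)
    (hba : Real.sqrt μ = Real.sqrt ((R + 1) ^ 2 + 1) * a) (hs : s ∈ Ioc (1:ℝ) R) :
    1 / (R * Real.sqrt ((R + 1) ^ 2 + 1)) * (1 / (s + (a - 1))) ≤ g2 μ s := by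
  set b : ℝ := Real.sqrt ((R + 1) ^ 2 + 1) with hbdef
  have hb : 0 < b := Real.sqrt_pos.2 (by positivity)
  have hs1 : (1:ℝ) < s := hs.1
  have hs0 : (0:ℝ) < s := lt_trans one_pos hs1
  have hR0 : (0:ℝ) < R := lt_of_lt_of_le hs0 hs.2
  unfold g2
  rw [one_div_mul_one_div]
  apply one_div_le_one_div_of_le
  · have : 0 < Real.sqrt (μ + uu s) := Real.sqrt_pos.2 (add_uu_pos hμ s)
    positivity
  · have h1 : Real.sqrt (μ + uu s) ≤ Real.sqrt μ + Real.sqrt (uu s) :=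
      sqrt_add_le hμ.le (uu_nonneg s)
    have h2 : Real.sqrt (uu s) ≤ b * (s - 1) := sqrt_uu_le hs1.le hs.2
    calc s * Real.sqrt (μ + uu s) ≤ R * (Real.sqrt μ + Real.sqrt (uu s)) := by
          apply mul_le_mul hs.2 h1 (Real.sqrt_nonneg _) hR0.le
      _ ≤ R * (b * a + b * (s - 1)) := by
          apply mul_le_mul_of_nonneg_left _ hR0.le
          rw [← hba]; linarith
      _ = R * b * (s + (a - 1)) := by ring

lemma int_one_div_shift {R a : ℝ} (hR : 1 < R) (ha : 0 < a) :
    ∫ s in Ioc (1:ℝ) R, 1 / (s + (a - 1)) = Real.log ((R - 1 + a) / a) := by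
  rw [← integral_of_le hR.le]
  have h := integral_comp_add_right (a := (1:ℝ)) (b := R) (fun x => 1 / x) (a - 1)
  rw [h]
  rw [integral_one_div]
  · congr 1 <;> ring
  · intro hmem
    rcases hmem with ⟨h1, _⟩
    simp only [inf_le_iff] at h1
    rcases h1 with h | h <;> linarith

lemma shift_contOn {R a : ℝ} (ha : 0 < a) :
    ContinuousOn (fun s : ℝ => 1 / (s + (a - 1))) (Icc 1 R) := by
  apply ContinuousOn.div continuousOn_const (continuousOn_id.add continuousOn_const)
  intro s hs
  have : (1:ℝ) ≤ s := hs.1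
  intro h0; simp only [Pi.add_apply, id] at h0; linarith

lemma int_g2_lower {R μ a : ℝ} (hR : 1 < R) (hμ : 0 < μ) (ha : 0 < a)
    (hba : Real.sqrt μ = Real.sqrt ((R + 1) ^ 2 + 1) * a) :
    1 / (R * Real.sqrt ((R + 1) ^ 2 + 1)) * Real.log ((R - 1 + a) / a)
      ≤ ∫ s, g2 μ s ∂(PP R) := by
  have key : ∫ s in Ioc (1:ℝ) R,
      (1 / (R * Real.sqrt ((R + 1) ^ 2 + 1)) * (1 / (s + (a - 1))))
      = 1 / (R * Real.sqrt ((R + 1) ^ 2 + 1)) * Real.log ((R - 1 + a) / a) := by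
    rw [MeasureTheory.integral_const_mul, int_one_div_shift hR ha]
  rw [show (∫ s, g2 μ s ∂(PP R)) = ∫ s in Ioc (1:ℝ) R, g2 μ s from rfl, ← key]
  apply setIntegral_mono_on _ (g2_int hμ) measurableSet_Ioc
  · exact fun s hs => g2_lower_ptwise hμ ha hba hs
  · exact (((shift_contOn (R := R) ha).integrableOn_Icc).mono_set
      Ioc_subset_Icc_self).const_mul _

end Stmt5Aux
namespace Stmt5Aux
open MeasureTheory Real Set Filter intervalIntegral

lemma exists_hi {R A : ℝ} (hR : 1 < R) (hA : Real.log R ^ 2 < A) :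
    ∃ μ : ℝ, 0 < μ ∧ morphF R μ ≤ A := by
  set L := Real.log R with hL
  have hL0 : 0 < L := Real.log_pos hR
  have hA0 : 0 < A := lt_of_le_of_lt (by positivity) hA
  have hD : 0 < A ^ 2 - L ^ 4 := by nlinarith
  set μ := max 1 (L ^ 4 * uu R / (A ^ 2 - L ^ 4)) with hμdef
  have hμ0 : 0 < μ := lt_of_lt_of_le one_pos (le_max_left _ _)
  refine ⟨μ, hμ0, ?_⟩
  have hige : L ^ 4 * uu R / (A ^ 2 - L ^ 4) ≤ μ := le_max_right _ _
  have hkey : L ^ 4 * (μ + uu R) ≤ A ^ 2 * μ := by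
    rw [div_le_iff₀ hD] at hige
    nlinarith
  have hs1 : Real.sqrt (L ^ 4 * (μ + uu R)) ≤ Real.sqrt (A ^ 2 * μ) :=
    Real.sqrt_le_sqrt hkey
  have e1 : Real.sqrt (L ^ 4 * (μ + uu R)) = L ^ 2 * Real.sqrt (μ + uu R) := by
    rw [show L ^ 4 = (L ^ 2) ^ 2 by ring, Real.sqrt_mul (by positivity),
      Real.sqrt_sq (by positivity)]
  have e2 : Real.sqrt (A ^ 2 * μ) = A * Real.sqrt μ := by
    rw [Real.sqrt_mul (by positivity), Real.sqrt_sq hA0.le]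
  have hsqμ : 0 < Real.sqrt μ := Real.sqrt_pos.2 hμ0
  calc morphF R μ ≤ (Real.sqrt (μ + uu R) * L) * ((1 / Real.sqrt μ) * L) :=
        morphF_upper hR.le hμ0
    _ = (L ^ 2 * Real.sqrt (μ + uu R)) / Real.sqrt μ := by ring
    _ ≤ A := by
        rw [div_le_iff₀ hsqμ, ← e1]
        calc Real.sqrt (L ^ 4 * (μ + uu R)) ≤ Real.sqrt (A ^ 2 * μ) := hs1
          _ = A * Real.sqrt μ := e2

lemma exists_lo {R A : ℝ} (hR : 1 < R) (hA : 0 < A) :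
    ∃ μ : ℝ, 0 < μ ∧ A ≤ morphF R μ := by
  set b := Real.sqrt ((R + 1) ^ 2 + 1) with hbdef
  have hb : 0 < b := Real.sqrt_pos.2 (by positivity)
  have hc := c1_pos (R := R) hR
  have hR0 : (0:ℝ) < R := lt_trans one_pos hR
  set M := A * R * b / c1 R + 1 with hM
  have hM0 : 0 < M := by
    have h := div_pos (show (0:ℝ) < A * R * b by positivity) hc
    rw [hM]
    linarith
  set a := (R - 1) / Real.exp M with ha
  have ha0 : 0 < a := div_pos (by linarith) (Real.exp_pos M)
  refine ⟨(b * a) ^ 2, by positivity, ?_⟩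
  have hμ0 : 0 < (b * a) ^ 2 := by positivity
  have hba : Real.sqrt ((b * a) ^ 2) = b * a := Real.sqrt_sq (by positivity)
  have hlog : M ≤ Real.log ((R - 1 + a) / a) := by
    have hratio : (R - 1 + a) / a = Real.exp M + 1 := by
      have hR1 : R - 1 ≠ 0 := ne_of_gt (by linarith)
      rw [ha]; field_simp
    rw [hratio]
    calc M = Real.log (Real.exp M) := (Real.log_exp M).symm
      _ ≤ Real.log (Real.exp M + 1) :=
          Real.log_le_log (Real.exp_pos M) (by linarith)
  have h1 : c1 R ≤ ∫ s, g1 ((b * a) ^ 2) s ∂(PP R) := int_g1_lower hμ0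
  have h2 : 1 / (R * b) * Real.log ((R - 1 + a) / a)
      ≤ ∫ s, g2 ((b * a) ^ 2) s ∂(PP R) := int_g2_lower hR hμ0 ha0 hba
  have hlow2 : 0 ≤ 1 / (R * b) * Real.log ((R - 1 + a) / a) :=
    mul_nonneg (by positivity) (le_trans hM0.le hlog)
  have step1 : c1 R * (1 / (R * b) * M) = A + c1 R / (R * b) := by
    rw [hM]; field_simp
  have step2 : A ≤ c1 R * (1 / (R * b) * M) := by
    rw [step1]
    have : 0 < c1 R / (R * b) := div_pos hc (by positivity)
    linarith
  calc A ≤ c1 R * (1 / (R * b) * M) := step2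
    _ ≤ c1 R * (1 / (R * b) * Real.log ((R - 1 + a) / a)) := by
        apply mul_le_mul_of_nonneg_left _ hc.le
        apply mul_le_mul_of_nonneg_left hlog (by positivity)
    _ ≤ (∫ s, g1 ((b * a) ^ 2) s ∂(PP R)) * ∫ s, g2 ((b * a) ^ 2) s ∂(PP R) :=
        mul_le_mul h1 h2 hlow2 int_g1_nonneg
    _ = morphF R ((b * a) ^ 2) := (morphF_eq hR.le).symm

lemma morphF_anti {R x y : ℝ} (hR : 1 < R) (hx : 0 < x) (hxy : x ≤ y) :
    morphF R y ≤ morphF R x := by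
  rcases eq_or_lt_of_le hxy with rfl | h
  · exact le_refl _
  · exact (morphF_strictAnti hR hx h).le

end Stmt5Aux

theorem stmt_5 (R A : ℝ) (hR : 1 < R) (hA : (Real.log R) ^ 2 < A) :
    ∃! μ : ℝ, 0 < μ ∧ morphF R μ = A := by
  classical
  obtain ⟨μh, hμh0, hμhA⟩ := Stmt5Aux.exists_hi hR hA
  obtain ⟨μl, hμl0, hμlA⟩ := Stmt5Aux.exists_lo hR (lt_of_le_of_lt (sq_nonneg _) hA)
  set a := min μl μh with hadef
  set b := max μl μh with hbdef
  have ha0 : 0 < a := lt_min hμl0 hμh0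
  have hab : a ≤ b := min_le_max
  have hfa : A ≤ morphF R a :=
    le_trans hμlA (Stmt5Aux.morphF_anti hR ha0 (min_le_left _ _))
  have hfb : morphF R b ≤ A :=
    le_trans (Stmt5Aux.morphF_anti hR hμh0 (le_max_right _ _)) hμhA
  have hcont : ContinuousOn (morphF R) (Set.Icc a b) := fun μ hμ =>
    (Stmt5Aux.morphF_contAt hR.le (lt_of_lt_of_le ha0 hμ.1)).continuousWithinAt
  obtain ⟨μ, hμmem, hfμ⟩ := intermediate_value_Icc' hab hcont ⟨hfb, hfa⟩
  have hμ0 : 0 < μ := lt_of_lt_of_le ha0 hμmem.1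
  refine ⟨μ, ⟨hμ0, hfμ⟩, ?_⟩
  rintro ν ⟨hν0, hνA⟩
  by_contra hne
  rcases lt_or_gt_of_ne hne with h | h
  · have := Stmt5Aux.morphF_strictAnti hR hν0 h
    rw [hνA, hfμ] at this
    exact lt_irrefl _ this
  · have := Stmt5Aux.morphF_strictAnti hR hμ0 h
    rw [hνA, hfμ] at this
    exact lt_irrefl _ this
end

section
/- Let ψ : [0,1] → ℝ be absolutely continuous with ψ(0) = 1, ψ(1) = R > 1, and define h(t) = max{1, ψ(t)}. Then ∫_0^1 (h'/h)² dt ≤ ∫_0^1 (ψ'/ψ)² dt and J(h) ≤ J(ψ), where J(φ) = ∫_0^1 ((φ²-1)² + (φ-1)²) dt. Moreover, if ψ < 1 on a set of positive measure then J(h) < J(ψ). -/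
open MeasureTheory

theorem stmt_9 (R : ℝ) (hR : 1 < R) (ψ ψ' : ℝ → ℝ)
    (hac : ∀ᵐ t ∂(volume.restrict (Set.Ioo (0:ℝ) 1)), HasDerivAt ψ (ψ' t) t)
    (hcont : ContinuousOn ψ (Set.Icc 0 1))
    (hb0 : ψ 0 = 1) (hb1 : ψ 1 = R)
    (hint1 : IntervalIntegrable (fun t => (ψ' t / ψ t) ^ 2) volume 0 1)
    (hint2 : IntervalIntegrable
      (fun t => ((ψ t ^ 2 - 1) ^ 2 + (ψ t - 1) ^ 2)) volume 0 1) :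
    (∫ t in (0:ℝ)..1, ((if 1 < ψ t then ψ' t else 0) / max 1 (ψ t)) ^ 2)
        ≤ ∫ t in (0:ℝ)..1, (ψ' t / ψ t) ^ 2 ∧
    (∫ t in (0:ℝ)..1, (((max 1 (ψ t)) ^ 2 - 1) ^ 2 + (max 1 (ψ t) - 1) ^ 2))
        ≤ ∫ t in (0:ℝ)..1, ((ψ t ^ 2 - 1) ^ 2 + (ψ t - 1) ^ 2) ∧
    (0 < volume {t : ℝ | t ∈ Set.Icc (0:ℝ) 1 ∧ ψ t < 1} →
      (∫ t in (0:ℝ)..1, (((max 1 (ψ t)) ^ 2 - 1) ^ 2 + (max 1 (ψ t) - 1) ^ 2))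
        < ∫ t in (0:ℝ)..1, ((ψ t ^ 2 - 1) ^ 2 + (ψ t - 1) ^ 2)) := by
  classical
  set F : ℝ → ℝ := fun t => ((if 1 < ψ t then ψ' t else 0) / max 1 (ψ t)) ^ 2 with hF
  set G : ℝ → ℝ := fun t => (ψ' t / ψ t) ^ 2 with hG
  set P : ℝ → ℝ := fun t => ((max 1 (ψ t)) ^ 2 - 1) ^ 2 + (max 1 (ψ t) - 1) ^ 2 with hP
  set Q : ℝ → ℝ := fun t => (ψ t ^ 2 - 1) ^ 2 + (ψ t - 1) ^ 2 with hQ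
  -- pointwise inequalities
  have hFG : ∀ t, F t ≤ G t := by
    intro t
    by_cases h : 1 < ψ t
    · simp only [hF, hG, if_pos h, max_eq_right h.le]
      exact le_rfl
    · simp only [hF, if_neg h, zero_div, ne_eq]
      simpa using sq_nonneg (ψ' t / ψ t)
  have hPQ : ∀ t, P t ≤ Q t := by
    intro t
    by_cases h : 1 ≤ ψ t
    · simp [hP, hQ, max_eq_right h]
    · push_neg at h
      have : max 1 (ψ t) = 1 := max_eq_left h.le
      simp only [hP, this, one_pow, sub_self]
      have : (0:ℝ) ≤ Q t := add_nonneg (sq_nonneg _) (sq_nonneg _)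
      simpa using this
  -- measures
  have hres : volume.restrict (Set.Ioo (0:ℝ) 1) = volume.restrict (Set.Ioc (0:ℝ) 1) :=
    Measure.restrict_congr_set Ioo_ae_eq_Ioc
  have hac' : ∀ᵐ t ∂(volume.restrict (Set.Ioc (0:ℝ) 1)), HasDerivAt ψ (ψ' t) t := by
    rwa [hres] at hac
  -- measurability
  have hψae : AEMeasurable ψ (volume.restrict (Set.Ioc (0:ℝ) 1)) :=
    (hcont.aemeasurable measurableSet_Icc).mono_measure
      (Measure.restrict_mono Set.Ioc_subset_Icc_self le_rfl)
  have hψ'ae : AEMeasurable ψ' (volume.restrict (Set.Ioc (0:ℝ) 1)) := by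
    have h1 : ψ' =ᵐ[volume.restrict (Set.Ioc (0:ℝ) 1)] deriv ψ := by
      filter_upwards [hac'] with t ht using (ht.deriv).symm
    exact (measurable_deriv ψ).aemeasurable.congr h1.symm
  have hFae : AEStronglyMeasurable F (volume.restrict (Set.Ioc (0:ℝ) 1)) := by
    have : AEMeasurable F (volume.restrict (Set.Ioc (0:ℝ) 1)) := by
      set μ := volume.restrict (Set.Ioc (0:ℝ) 1)
      set ψm := hψae.mk ψ with hψm
      set ψ'm := hψ'ae.mk ψ' with hψ'm
      have hmeas : Measurable fun t => ((if 1 < ψm t then ψ'm t else 0) / max 1 (ψm t)) ^ 2 := by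
        have hset : MeasurableSet {t | 1 < ψm t} :=
          measurableSet_lt measurable_const hψae.measurable_mk
        exact (((Measurable.ite hset hψ'ae.measurable_mk measurable_const).div
          (measurable_const.max hψae.measurable_mk)).pow measurable_const)
      refine hmeas.aemeasurable.congr ?_
      filter_upwards [hψae.ae_eq_mk, hψ'ae.ae_eq_mk] with t h1 h2
      simp only [hF, hψm, hψ'm, ← h1, ← h2]
    exact this.aestronglyMeasurable
  -- integrability
  have hGint : IntegrableOn G (Set.Ioc (0:ℝ) 1) volume := by
    rw [← intervalIntegrable_iff_integrableOn_Ioc_of_le (by norm_num : (0:ℝ) ≤ 1)]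
    exact hint1
  have hQint : IntegrableOn Q (Set.Ioc (0:ℝ) 1) volume := by
    rw [← intervalIntegrable_iff_integrableOn_Ioc_of_le (by norm_num : (0:ℝ) ≤ 1)]
    exact hint2
  have hFint : IntegrableOn F (Set.Ioc (0:ℝ) 1) volume := by
    refine hGint.mono' hFae (ae_of_all _ fun t => ?_)
    rw [Real.norm_eq_abs, abs_of_nonneg (sq_nonneg _)]
    exact hFG t
  have hPcont : ContinuousOn P (Set.Icc (0:ℝ) 1) := by
    have hm : ContinuousOn (fun t => max 1 (ψ t)) (Set.Icc (0:ℝ) 1) :=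
      (continuous_const.max continuous_id).comp_continuousOn hcont
    exact (((hm.pow 2).sub continuousOn_const).pow 2).add ((hm.sub continuousOn_const).pow 2)
  have hPint : IntegrableOn P (Set.Ioc (0:ℝ) 1) volume := by
    rw [← intervalIntegrable_iff_integrableOn_Ioc_of_le (by norm_num : (0:ℝ) ≤ 1)]
    exact hPcont.intervalIntegrable_of_Icc (by norm_num)
  -- rewrite interval integrals as set integrals
  have e1 : ∀ (f : ℝ → ℝ), (∫ t in (0:ℝ)..1, f t) = ∫ t in Set.Ioc (0:ℝ) 1, f t := by
    intro f
    rw [intervalIntegral.integral_of_le (by norm_num : (0:ℝ) ≤ 1)]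
  refine ⟨?_, ?_, ?_⟩
  · rw [show (∫ t in (0:ℝ)..1, ((if 1 < ψ t then ψ' t else 0) / max 1 (ψ t)) ^ 2) = ∫ t in (0:ℝ)..1, F t from rfl,
      e1 F, e1 G]
    exact setIntegral_mono_on hFint hGint measurableSet_Ioc fun t _ => hFG t
  · rw [e1 P, e1 Q]
    exact setIntegral_mono_on hPint hQint measurableSet_Ioc fun t _ => hPQ t
  · intro hS
    rw [e1 P, e1 Q]
    set D : ℝ → ℝ := fun t => Q t - P t with hD
    have hDint : IntegrableOn D (Set.Ioc (0:ℝ) 1) volume := hQint.sub hPint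
    have hDnn : 0 ≤ᵐ[volume.restrict (Set.Ioc (0:ℝ) 1)] D :=
      ae_of_all _ fun t => sub_nonneg.mpr (hPQ t)
    have hsub : {t : ℝ | t ∈ Set.Icc (0:ℝ) 1 ∧ ψ t < 1} ⊆
        Function.support D ∩ Set.Ioc (0:ℝ) 1 := by
      intro t ⟨htI, htψ⟩
      have ht0 : t ≠ 0 := by rintro rfl; rw [hb0] at htψ; exact lt_irrefl 1 htψ
      have ht1 : t ≠ 1 := by rintro rfl; rw [hb1] at htψ; linarith
      have htIoc : t ∈ Set.Ioc (0:ℝ) 1 :=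
        ⟨lt_of_le_of_ne htI.1 (Ne.symm ht0), htI.2⟩
      refine ⟨?_, htIoc⟩
      have hmax : max 1 (ψ t) = 1 := max_eq_left htψ.le
      have hQpos : 0 < Q t := by
        have h2 : 0 < (ψ t - 1) ^ 2 := by nlinarith
        have : (0:ℝ) ≤ (ψ t ^ 2 - 1) ^ 2 := sq_nonneg _
        simp only [hQ]; linarith
      have hP0 : P t = 0 := by simp [hP, hmax]
      simp only [Function.mem_support, hD, hP0, sub_zero]
      exact ne_of_gt hQpos
    have hpos : 0 < ∫ t in Set.Ioc (0:ℝ) 1, D t := by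
      rw [setIntegral_pos_iff_support_of_nonneg_ae hDnn hDint]
      calc 0 < volume {t : ℝ | t ∈ Set.Icc (0:ℝ) 1 ∧ ψ t < 1} := hS
        _ ≤ volume (Function.support D ∩ Set.Ioc (0:ℝ) 1) := measure_mono hsub
    have := integral_sub hQint hPint
    have heq : (∫ t in Set.Ioc (0:ℝ) 1, D t) =
        (∫ t in Set.Ioc (0:ℝ) 1, Q t) - ∫ t in Set.Ioc (0:ℝ) 1, P t := this
    linarith
end

section
/- Let R > 0 and define F(q, r) = π - 2πR² + (πR⁴/(3r²))(1 + q² + (r-1)r)(1 + q² + r + r²) for (q, r) ∈ ℝ × (0,∞). Then (0, 1) is the unique critical point of F, F is convex on ℝ × (0,∞), (0,1) is the unique global minimizer of F, and F(0,1) = π(R²-1)². -/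
/-- The reduced energy function `F(q,r)` from the paper. -/
noncomputable def redF (R : ℝ) (p : ℝ × ℝ) : ℝ :=
  Real.pi - 2 * Real.pi * R ^ 2 +
    (Real.pi * R ^ 4 / (3 * p.2 ^ 2)) * (1 + p.1 ^ 2 + (p.2 - 1) * p.2) *
      (1 + p.1 ^ 2 + p.2 + p.2 ^ 2)

lemma redF_key (R q r : ℝ) (hr : 0 < r) :
    redF R (q, r) = Real.pi * (R ^ 2 - 1) ^ 2 +
      Real.pi * R ^ 4 / (3 * r ^ 2) * ((q ^ 2 + (r - 1) ^ 2) * (q ^ 2 + (r + 1) ^ 2)) := by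
  unfold redF
  field_simp
  ring

lemma redF_keyU (R q r : ℝ) (hr : 0 < r) :
    redF R (q, r) = (Real.pi - 2 * Real.pi * R ^ 2 - Real.pi * R ^ 4 / 3) +
      (Real.pi * R ^ 4 / 3) * ((1 + q ^ 2) / r + r) ^ 2 := by
  unfold redF
  field_simp
  ring

lemma uineq {x1 x2 y1 y2 a b : ℝ} (hx2 : 0 < x2) (hy2 : 0 < y2)
    (ha : 0 ≤ a) (hb : 0 ≤ b) (hab : a + b = 1) :
    (1 + (a * x1 + b * y1) ^ 2) / (a * x2 + b * y2) + (a * x2 + b * y2) ≤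
      a * ((1 + x1 ^ 2) / x2 + x2) + b * ((1 + y1 ^ 2) / y2 + y2) := by
  have hz : 0 < a * x2 + b * y2 := by
    rcases le_total x2 y2 with h | h
    · nlinarith
    · nlinarith
  rw [← sub_nonneg]
  have h : a * ((1 + x1 ^ 2) / x2 + x2) + b * ((1 + y1 ^ 2) / y2 + y2) -
      ((1 + (a * x1 + b * y1) ^ 2) / (a * x2 + b * y2) + (a * x2 + b * y2)) =
      (a * b * ((x1 * y2 - y1 * x2) ^ 2 + (x2 - y2) ^ 2)) / (x2 * y2 * (a * x2 + b * y2)) := by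
    field_simp
    linear_combination (x2 * y2 * (a + b + 1)) * hab
  rw [h]
  positivity

lemma redF_convexOn (R : ℝ) :
    ConvexOn ℝ ((Set.univ : Set ℝ) ×ˢ Set.Ioi (0:ℝ)) (redF R) := by
  refine ⟨convex_univ.prod (convex_Ioi 0), ?_⟩
  rintro ⟨x1, x2⟩ ⟨-, hx2⟩ ⟨y1, y2⟩ ⟨-, hy2⟩ a b ha hb hab
  simp only [Set.mem_Ioi] at hx2 hy2
  have hz : 0 < a * x2 + b * y2 := by
    rcases le_total x2 y2 with h | h
    · nlinarith
    · nlinarith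
  simp only [Prod.smul_mk, Prod.mk_add_mk, smul_eq_mul]
  rw [redF_keyU R _ _ hx2, redF_keyU R _ _ hy2, redF_keyU R _ _ hz]
  set ux := (1 + x1 ^ 2) / x2 + x2 with hux
  set uy := (1 + y1 ^ 2) / y2 + y2 with huy
  set uz := (1 + (a * x1 + b * y1) ^ 2) / (a * x2 + b * y2) + (a * x2 + b * y2) with huz
  have hu : uz ≤ a * ux + b * uy := uineq hx2 hy2 ha hb hab
  have huz0 : 0 ≤ uz := by rw [huz]; positivity
  have hK : (0:ℝ) ≤ Real.pi * R ^ 4 / 3 := by positivity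
  have h2 : uz ^ 2 ≤ a * ux ^ 2 + b * uy ^ 2 := by
    nlinarith [mul_nonneg ha hb, sq_nonneg (ux - uy), hu, huz0]
  have hb1 : b = 1 - a := by linarith
  subst hb1
  nlinarith [mul_le_mul_of_nonneg_left h2 hK]

lemma redF_at_min (R : ℝ) : redF R (0, 1) = Real.pi * (R ^ 2 - 1) ^ 2 := by
  unfold redF; norm_num; ring

lemma redF_le (R : ℝ) (p : ℝ × ℝ) (hp : 0 < p.2) : redF R (0, 1) ≤ redF R p := by
  rw [redF_at_min, show p = (p.1, p.2) from rfl, redF_key R p.1 p.2 hp]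
  have : (0:ℝ) ≤ Real.pi * R ^ 4 / (3 * p.2 ^ 2) *
      ((p.1 ^ 2 + (p.2 - 1) ^ 2) * (p.1 ^ 2 + (p.2 + 1) ^ 2)) := by positivity
  linarith

lemma redF_lt (R : ℝ) (hR : 0 < R) (p : ℝ × ℝ) (hp : 0 < p.2) (hne : p ≠ (0, 1)) :
    redF R (0, 1) < redF R p := by
  rw [redF_at_min, show p = (p.1, p.2) from rfl, redF_key R p.1 p.2 hp]
  have h1 : 0 < p.1 ^ 2 + (p.2 - 1) ^ 2 := by
    rcases not_and_or.mp (fun h' : p.1 = 0 ∧ p.2 = 1 => hne (Prod.ext h'.1 h'.2)) with h | h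
    · have := sq_pos_of_ne_zero h
      nlinarith [sq_nonneg (p.2 - 1)]
    · have := sq_pos_of_ne_zero (sub_ne_zero.mpr h)
      nlinarith [sq_nonneg p.1]
  have : (0:ℝ) < Real.pi * R ^ 4 / (3 * p.2 ^ 2) *
      ((p.1 ^ 2 + (p.2 - 1) ^ 2) * (p.1 ^ 2 + (p.2 + 1) ^ 2)) := by
    have h2 : (0:ℝ) < p.1 ^ 2 + (p.2 + 1) ^ 2 := by positivity
    positivity
  linarith

lemma redF_fderiv_zero (R : ℝ) : fderiv ℝ (redF R) (0, 1) = 0 := by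
  have hmin : IsLocalMin (redF R) ((0:ℝ), (1:ℝ)) := by
    have ho : IsOpen {p : ℝ × ℝ | 0 < p.2} := isOpen_lt continuous_const continuous_snd
    filter_upwards [ho.mem_nhds (by norm_num : ((0:ℝ),(1:ℝ)) ∈ {p : ℝ × ℝ | 0 < p.2})] with p hp
    exact redF_le R p hp
  exact hmin.fderiv_eq_zero

lemma crit_eq (R : ℝ) (hR : 0 < R) (q r : ℝ) (hr : 0 < r)
    (hf : fderiv ℝ (redF R) (q, r) = 0) : q = 0 ∧ r = 1 := by
  have hd : DifferentiableAt ℝ (redF R) (q, r) := by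
    have h2 : (3 : ℝ) * (q, r).2 ^ 2 ≠ 0 := by simp; positivity
    unfold redF
    fun_prop (disch := assumption)
  have hF0 : HasFDerivAt (redF R) 0 (q, r) := hf ▸ hd.hasFDerivAt
  have hπ := Real.pi_pos
  have hq : q = 0 := by
    have hline : HasDerivAt (fun t : ℝ => ((t, r) : ℝ × ℝ)) (1, 0) q :=
      (hasDerivAt_id q).prodMk (hasDerivAt_const q r)
    have h0 : HasDerivAt (fun t : ℝ => redF R (t, r)) 0 q := by
      exact (hF0.comp_hasDerivAt q hline).congr_deriv (g' := 0) (by simp)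
    have hB1 : HasDerivAt (fun t : ℝ => 1 + t ^ 2 + (r - 1) * r) (2 * q) q := by
      simpa using ((hasDerivAt_pow 2 q).const_add 1).add_const ((r - 1) * r)
    have hB2 : HasDerivAt (fun t : ℝ => 1 + t ^ 2 + r + r ^ 2) (2 * q) q := by
      simpa using (((hasDerivAt_pow 2 q).const_add 1).add_const r).add_const (r ^ 2)
    have h1 : HasDerivAt (fun t : ℝ => redF R (t, r))
        ((Real.pi * R ^ 4 / (3 * r ^ 2)) * (2 * q) * (1 + q ^ 2 + r + r ^ 2) +
          ((Real.pi * R ^ 4 / (3 * r ^ 2)) * (1 + q ^ 2 + (r - 1) * r)) * (2 * q)) q := by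
      have := ((hB1.const_mul (Real.pi * R ^ 4 / (3 * r ^ 2))).mul hB2).const_add
        (Real.pi - 2 * Real.pi * R ^ 2)
      exact this
    have he := h1.unique h0
    have hq0 : q * ((Real.pi * R ^ 4 / (3 * r ^ 2)) * (4 + 4 * q ^ 2 + 4 * r ^ 2)) = 0 := by
      linear_combination he
    rcases mul_eq_zero.mp hq0 with h | h
    · exact h
    · exact absurd h (ne_of_gt (by positivity))
  subst hq
  refine ⟨rfl, ?_⟩
  have hline : HasDerivAt (fun s : ℝ => (((0:ℝ), s) : ℝ × ℝ)) (0, 1) r :=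
    (hasDerivAt_const r (0:ℝ)).prodMk (hasDerivAt_id r)
  have h0 : HasDerivAt (fun s : ℝ => redF R (0, s)) 0 r := by
    exact (hF0.comp_hasDerivAt r hline).congr_deriv (g' := 0) (by simp)
  have hr' : (3:ℝ) * r ^ 2 ≠ 0 := by positivity
  have hK : HasDerivAt (fun s : ℝ => Real.pi * R ^ 4 / (3 * s ^ 2))
      ((0 * (3 * r ^ 2) - Real.pi * R ^ 4 * (3 * (2 * r ^ 1))) / (3 * r ^ 2) ^ 2) r :=
    (hasDerivAt_const r (Real.pi * R ^ 4)).div ((hasDerivAt_pow 2 r).const_mul 3) hr'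
  have hB1 : HasDerivAt (fun s : ℝ => 1 + (0:ℝ) ^ 2 + (s - 1) * s) (1 * r + (r - 1) * 1) r :=
    (((hasDerivAt_id r).sub_const 1).mul (hasDerivAt_id r)).const_add (1 + (0:ℝ) ^ 2)
  have hB2 : HasDerivAt (fun s : ℝ => 1 + (0:ℝ) ^ 2 + s + s ^ 2) (1 + 2 * r ^ 1) r :=
    (((hasDerivAt_id r).const_add (1 + (0:ℝ) ^ 2)).add (hasDerivAt_pow 2 r))
  have h1 : HasDerivAt (fun s : ℝ => redF R (0, s))
      (((0 * (3 * r ^ 2) - Real.pi * R ^ 4 * (3 * (2 * r ^ 1))) / (3 * r ^ 2) ^ 2 *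
          (1 + (0:ℝ) ^ 2 + (r - 1) * r) +
        Real.pi * R ^ 4 / (3 * r ^ 2) * (1 * r + (r - 1) * 1)) *
          (1 + (0:ℝ) ^ 2 + r + r ^ 2) +
        Real.pi * R ^ 4 / (3 * r ^ 2) * (1 + (0:ℝ) ^ 2 + (r - 1) * r) * (1 + 2 * r ^ 1)) r := by
    have := ((hK.mul hB1).mul hB2).const_add (Real.pi - 2 * Real.pi * R ^ 2)
    exact this
  have he := h1.unique h0
  have h4 : r ^ 4 = 1 := by
    field_simp at he
    have h5 : (54 * Real.pi * R ^ 4 * r ^ 5) * (r ^ 4 - 1) = 0 := by linear_combination (27 * r ^ 5) * he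
    rcases mul_eq_zero.mp h5 with h | h
    · exact absurd h (ne_of_gt (by positivity))
    · linarith
  have hfac : (r - 1) * (r ^ 3 + r ^ 2 + r + 1) = 0 := by linear_combination h4
  rcases mul_eq_zero.mp hfac with h | h
  · linarith
  · exact absurd h (ne_of_gt (by positivity))

theorem stmt_13 (R : ℝ) (hR : 0 < R) :
    (∀ p : ℝ × ℝ, 0 < p.2 → (fderiv ℝ (redF R) p = 0 ↔ p = (0, 1))) ∧
    ConvexOn ℝ ((Set.univ : Set ℝ) ×ˢ Set.Ioi (0:ℝ)) (redF R) ∧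
    (∀ p : ℝ × ℝ, 0 < p.2 → p ≠ (0, 1) → redF R (0, 1) < redF R p) ∧
    redF R (0, 1) = Real.pi * (R ^ 2 - 1) ^ 2 := by
  refine ⟨?_, redF_convexOn R, fun p hp hne => redF_lt R hR p hp hne, redF_at_min R⟩
  intro p hp
  constructor
  · intro hf
    obtain ⟨hq, hr⟩ := crit_eq R hR p.1 p.2 hp (by rwa [show ((p.1, p.2) : ℝ × ℝ) = p from rfl])
    exact Prod.ext hq hr
  · rintro rfl
    exact redF_fderiv_zero R
end
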